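/- Assume that k ↦ 1/μ(k) is Lebesgue integrable on [−π,π]², and define W : ℝ² → ℂ by W(k1,k2) = g_{(0,0)}·exp(i(k1+k2)) − g_{(1,0)}·exp(i k2) − g_{(0,1)}·exp(i k1) + g_{(1,1)}. Then for every p = (p1,p2) ∈ ℝ², conj(W(p1,p2)) = W(π−p1, π−p2). In particular, if p⁺ is a zero of μ and p⁻ = (π,π) − p⁺, then conj(W(p⁺)) = W(p⁻). -/

import Mathlib

open Complex Real MeasureTheory ComplexConjugate

/-- The characteristic polynomial of the non-interacting dimer model. -/
noncomputable def mu (t1 t2 t3 : ℝ) (k : ℝ × ℝ) : ℂ :=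
  (t1 : ℂ) + Complex.I * (t2 : ℂ) * Complex.exp (Complex.I * (k.1 : ℂ))
    - (t3 : ℂ) * Complex.exp (Complex.I * ((k.1 : ℂ) + (k.2 : ℂ)))
    - Complex.I * Complex.exp (Complex.I * (k.2 : ℂ))

/-- The Fourier coefficient `g_a = (2π)⁻² ∫_{[−π,π]²} e^{i k·a}/μ(k) dk`. -/
noncomputable def gcoef (t1 t2 t3 : ℝ) (a : ℤ × ℤ) : ℂ :=
  (((2 * π) ^ 2 : ℝ) : ℂ)⁻¹ *
    ∫ k in Set.Icc (-π) π ×ˢ Set.Icc (-π) π,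
      Complex.exp (Complex.I * ((k.1 : ℂ) * (a.1 : ℂ) + (k.2 : ℂ) * (a.2 : ℂ)))
        / mu t1 t2 t3 k

/-- `W(k) = g_{(0,0)} e^{i(k₁+k₂)} − g_{(1,0)} e^{i k₂} − g_{(0,1)} e^{i k₁} + g_{(1,1)}`. -/
noncomputable def Wfun (t1 t2 t3 : ℝ) (k : ℝ × ℝ) : ℂ :=
  gcoef t1 t2 t3 (0, 0) * Complex.exp (Complex.I * ((k.1 : ℂ) + (k.2 : ℂ)))
    - gcoef t1 t2 t3 (1, 0) * Complex.exp (Complex.I * (k.2 : ℂ))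
    - gcoef t1 t2 t3 (0, 1) * Complex.exp (Complex.I * (k.1 : ℂ))
    + gcoef t1 t2 t3 (1, 1)

section Aux

/-- Shift the first coordinate of a box from `[0,2π]` to `[−π,π]` for a `2π`-periodic function. -/
lemma strip1 (f : ℝ × ℝ → ℂ) (h1 : ∀ k : ℝ × ℝ, f (k.1 + 2 * π, k.2) = f k)
    (T : Set ℝ) (hT : MeasurableSet T)
    (hint : IntegrableOn f (Set.Icc (-π) π ×ˢ T)) :
    IntegrableOn f (Set.Icc 0 (2 * π) ×ˢ T) ∧
      ∫ k in Set.Icc 0 (2 * π) ×ˢ T, f k = ∫ k in Set.Icc (-π) π ×ˢ T, f k := by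
  have hπ := pi_pos
  have hmp : MeasurePreserving (fun k : ℝ × ℝ => k + (2 * π, 0)) volume volume :=
    measurePreserving_add_right volume _
  have hemb : MeasurableEmbedding (fun k : ℝ × ℝ => k + (2 * π, 0)) :=
    (Homeomorph.addRight ((2 * π, 0) : ℝ × ℝ)).measurableEmbedding
  have hfe : ∀ k : ℝ × ℝ, f (k + (2 * π, 0)) = f k := by
    intro k
    show f (k.1 + 2 * π, k.2 + 0) = f k
    rw [add_zero]; exact h1 k
  have hpre : (fun k : ℝ × ℝ => k + (2 * π, 0)) ⁻¹' (Set.Icc π (2 * π) ×ˢ T)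
      = Set.Icc (-π) 0 ×ˢ T := by
    ext ⟨x, y⟩
    simp only [Set.mem_preimage, Prod.mk_add_mk, Set.prodMk_mem_set_prod_eq, Set.mem_Icc,
      add_zero]
    constructor
    · rintro ⟨⟨ha, hb⟩, hc⟩; exact ⟨⟨by linarith, by linarith⟩, hc⟩
    · rintro ⟨⟨ha, hb⟩, hc⟩; exact ⟨⟨by linarith, by linarith⟩, hc⟩
  have hintL : IntegrableOn f (Set.Icc (-π) 0 ×ˢ T) :=
    hint.mono_set (Set.prod_mono (Set.Icc_subset_Icc le_rfl hπ.le) subset_rfl)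
  have hintM : IntegrableOn f (Set.Icc 0 π ×ˢ T) :=
    hint.mono_set (Set.prod_mono (Set.Icc_subset_Icc (by linarith) le_rfl) subset_rfl)
  have hcomp : (f ∘ fun k : ℝ × ℝ => k + (2 * π, 0)) = f := funext hfe
  have hintR : IntegrableOn f (Set.Icc π (2 * π) ×ˢ T) := by
    have h := hmp.integrableOn_comp_preimage hemb (f := f) (s := Set.Icc π (2 * π) ×ˢ T)
    rw [hpre, hcomp] at h
    exact h.mp hintL
  have hIeq : ∫ k in Set.Icc π (2 * π) ×ˢ T, f k = ∫ k in Set.Icc (-π) 0 ×ˢ T, f k := by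
    have h := hmp.setIntegral_preimage_emb hemb f (Set.Icc π (2 * π) ×ˢ T)
    rw [hpre] at h
    rw [← h]
    exact MeasureTheory.integral_congr_ae (Filter.Eventually.of_forall fun k => hfe k)
  have hdisj : ∀ (c : ℝ) (A B : Set ℝ), A ∩ B = {c} →
      MeasureTheory.AEDisjoint volume (A ×ˢ T) (B ×ˢ T) := by
    intro c A B hAB
    have : (A ×ˢ T) ∩ (B ×ˢ T) = ({c} : Set ℝ) ×ˢ T := by
      rw [Set.prod_inter_prod, hAB, Set.inter_self]
    unfold MeasureTheory.AEDisjoint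
    rw [this, MeasureTheory.Measure.volume_eq_prod, MeasureTheory.Measure.prod_prod]
    simp
  have hd1 : Set.Icc (0:ℝ) π ∩ Set.Icc π (2 * π) = {π} := by
    rw [Set.Icc_inter_Icc, sup_eq_right.mpr hπ.le, inf_eq_left.mpr (by linarith), Set.Icc_self]
  have hd2 : Set.Icc (-π) (0:ℝ) ∩ Set.Icc 0 π = {0} := by
    rw [Set.Icc_inter_Icc, sup_eq_right.mpr (by linarith), inf_eq_left.mpr hπ.le, Set.Icc_self]
  have hsplit2 : Set.Icc (0:ℝ) (2 * π) = Set.Icc 0 π ∪ Set.Icc π (2 * π) :=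
    (Set.Icc_union_Icc_eq_Icc hπ.le (by linarith)).symm
  have hsplit1 : Set.Icc (-π) π = Set.Icc (-π) 0 ∪ Set.Icc 0 π :=
    (Set.Icc_union_Icc_eq_Icc (by linarith) hπ.le).symm
  constructor
  · rw [hsplit2, Set.union_prod]
    exact hintM.union hintR
  · rw [hsplit2, Set.union_prod,
      MeasureTheory.integral_union_ae (hdisj π _ _ hd1)
        ((measurableSet_Icc.prod hT).nullMeasurableSet) hintM hintR,
      hIeq, hsplit1, Set.union_prod,
      MeasureTheory.integral_union_ae (hdisj 0 _ _ hd2)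
        ((measurableSet_Icc.prod hT).nullMeasurableSet) hintL hintM]
    ring

/-- Shift the second coordinate of a box from `[0,2π]` to `[−π,π]` for a `2π`-periodic function. -/
lemma strip2 (f : ℝ × ℝ → ℂ) (h2 : ∀ k : ℝ × ℝ, f (k.1, k.2 + 2 * π) = f k)
    (T : Set ℝ) (hT : MeasurableSet T)
    (hint : IntegrableOn f (T ×ˢ Set.Icc (-π) π)) :
    IntegrableOn f (T ×ˢ Set.Icc 0 (2 * π)) ∧
      ∫ k in T ×ˢ Set.Icc 0 (2 * π), f k = ∫ k in T ×ˢ Set.Icc (-π) π, f k := by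
  have hπ := pi_pos
  have hmp : MeasurePreserving (fun k : ℝ × ℝ => k + (0, 2 * π)) volume volume :=
    measurePreserving_add_right volume _
  have hemb : MeasurableEmbedding (fun k : ℝ × ℝ => k + (0, 2 * π)) :=
    (Homeomorph.addRight ((0, 2 * π) : ℝ × ℝ)).measurableEmbedding
  have hfe : ∀ k : ℝ × ℝ, f (k + (0, 2 * π)) = f k := by
    intro k
    show f (k.1 + 0, k.2 + 2 * π) = f k
    rw [add_zero]; exact h2 k
  have hpre : (fun k : ℝ × ℝ => k + (0, 2 * π)) ⁻¹' (T ×ˢ Set.Icc π (2 * π))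
      = T ×ˢ Set.Icc (-π) 0 := by
    ext ⟨x, y⟩
    simp only [Set.mem_preimage, Prod.mk_add_mk, Set.prodMk_mem_set_prod_eq, Set.mem_Icc,
      add_zero]
    constructor
    · rintro ⟨hc, ha, hb⟩; exact ⟨hc, by linarith, by linarith⟩
    · rintro ⟨hc, ha, hb⟩; exact ⟨hc, by linarith, by linarith⟩
  have hintL : IntegrableOn f (T ×ˢ Set.Icc (-π) 0) :=
    hint.mono_set (Set.prod_mono subset_rfl (Set.Icc_subset_Icc le_rfl hπ.le))
  have hintM : IntegrableOn f (T ×ˢ Set.Icc 0 π) :=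
    hint.mono_set (Set.prod_mono subset_rfl (Set.Icc_subset_Icc (by linarith) le_rfl))
  have hcomp : (f ∘ fun k : ℝ × ℝ => k + (0, 2 * π)) = f := funext hfe
  have hintR : IntegrableOn f (T ×ˢ Set.Icc π (2 * π)) := by
    have h := hmp.integrableOn_comp_preimage hemb (f := f) (s := T ×ˢ Set.Icc π (2 * π))
    rw [hpre, hcomp] at h
    exact h.mp hintL
  have hIeq : ∫ k in T ×ˢ Set.Icc π (2 * π), f k = ∫ k in T ×ˢ Set.Icc (-π) 0, f k := by
    have h := hmp.setIntegral_preimage_emb hemb f (T ×ˢ Set.Icc π (2 * π))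
    rw [hpre] at h
    rw [← h]
    exact MeasureTheory.integral_congr_ae (Filter.Eventually.of_forall fun k => hfe k)
  have hdisj : ∀ (c : ℝ) (A B : Set ℝ), A ∩ B = {c} →
      MeasureTheory.AEDisjoint volume (T ×ˢ A) (T ×ˢ B) := by
    intro c A B hAB
    have : (T ×ˢ A) ∩ (T ×ˢ B) = T ×ˢ ({c} : Set ℝ) := by
      rw [Set.prod_inter_prod, hAB, Set.inter_self]
    unfold MeasureTheory.AEDisjoint
    rw [this, MeasureTheory.Measure.volume_eq_prod, MeasureTheory.Measure.prod_prod]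
    simp
  have hd1 : Set.Icc (0:ℝ) π ∩ Set.Icc π (2 * π) = {π} := by
    rw [Set.Icc_inter_Icc, sup_eq_right.mpr hπ.le, inf_eq_left.mpr (by linarith), Set.Icc_self]
  have hd2 : Set.Icc (-π) (0:ℝ) ∩ Set.Icc 0 π = {0} := by
    rw [Set.Icc_inter_Icc, sup_eq_right.mpr (by linarith), inf_eq_left.mpr hπ.le, Set.Icc_self]
  have hsplit2 : Set.Icc (0:ℝ) (2 * π) = Set.Icc 0 π ∪ Set.Icc π (2 * π) :=
    (Set.Icc_union_Icc_eq_Icc hπ.le (by linarith)).symm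
  have hsplit1 : Set.Icc (-π) π = Set.Icc (-π) 0 ∪ Set.Icc 0 π :=
    (Set.Icc_union_Icc_eq_Icc (by linarith) hπ.le).symm
  constructor
  · rw [hsplit2, Set.prod_union]
    exact hintM.union hintR
  · rw [hsplit2, Set.prod_union,
      MeasureTheory.integral_union_ae (hdisj π _ _ hd1)
        ((hT.prod measurableSet_Icc).nullMeasurableSet) hintM hintR,
      hIeq, hsplit1, Set.prod_union,
      MeasureTheory.integral_union_ae (hdisj 0 _ _ hd2)
        ((hT.prod measurableSet_Icc).nullMeasurableSet) hintL hintM]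
    ring

/-- Reflection `k ↦ (π,π) − k` preserves the integral over `[−π,π]²` for doubly `2π`-periodic
functions. -/
lemma box_reflect (f : ℝ × ℝ → ℂ) (h1 : ∀ k : ℝ × ℝ, f (k.1 + 2 * π, k.2) = f k)
    (h2 : ∀ k : ℝ × ℝ, f (k.1, k.2 + 2 * π) = f k)
    (hint : IntegrableOn f (Set.Icc (-π) π ×ˢ Set.Icc (-π) π)) :
    ∫ k in Set.Icc (-π) π ×ˢ Set.Icc (-π) π, f (π - k.1, π - k.2)
      = ∫ k in Set.Icc (-π) π ×ˢ Set.Icc (-π) π, f k := by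
  have hπ := pi_pos
  have s2 := strip2 f h2 (Set.Icc (-π) π) measurableSet_Icc hint
  have s1 := strip1 f h1 (Set.Icc 0 (2 * π)) measurableSet_Icc s2.1
  have hmp : MeasurePreserving (fun k : ℝ × ℝ => ((π, π) : ℝ × ℝ) - k) volume volume :=
    Measure.measurePreserving_sub_left volume _
  have hemb : MeasurableEmbedding (fun k : ℝ × ℝ => ((π, π) : ℝ × ℝ) - k) :=
    (Homeomorph.subLeft ((π, π) : ℝ × ℝ)).measurableEmbedding
  have hpre : (fun k : ℝ × ℝ => ((π, π) : ℝ × ℝ) - k) ⁻¹'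
      (Set.Icc 0 (2 * π) ×ˢ Set.Icc 0 (2 * π)) = Set.Icc (-π) π ×ˢ Set.Icc (-π) π := by
    ext ⟨x, y⟩
    simp only [Set.mem_preimage, Prod.mk_sub_mk, Set.prodMk_mem_set_prod_eq, Set.mem_Icc]
    constructor
    · rintro ⟨⟨ha, hb⟩, hc, hd⟩; exact ⟨⟨by linarith, by linarith⟩, by linarith, by linarith⟩
    · rintro ⟨⟨ha, hb⟩, hc, hd⟩; exact ⟨⟨by linarith, by linarith⟩, by linarith, by linarith⟩
  have h := hmp.setIntegral_preimage_emb hemb f (Set.Icc 0 (2 * π) ×ˢ Set.Icc 0 (2 * π))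
  rw [hpre] at h
  calc ∫ k in Set.Icc (-π) π ×ˢ Set.Icc (-π) π, f (π - k.1, π - k.2)
      = ∫ k in Set.Icc 0 (2 * π) ×ˢ Set.Icc 0 (2 * π), f k := h
    _ = ∫ k in Set.Icc (-π) π ×ˢ Set.Icc 0 (2 * π), f k := s1.2
    _ = ∫ k in Set.Icc (-π) π ×ˢ Set.Icc (-π) π, f k := s2.2

end Aux


section Main

variable (t1 t2 t3 : ℝ)

lemma exp_pi_sub (x : ℝ) :
    Complex.exp (Complex.I * ((π : ℂ) - (x : ℂ))) = -Complex.exp (-Complex.I * (x : ℂ)) := by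
  rw [show Complex.I * ((π : ℂ) - (x : ℂ)) = (π : ℂ) * Complex.I + -Complex.I * (x : ℂ) by ring,
    Complex.exp_add, Complex.exp_pi_mul_I, neg_one_mul]

lemma exp_two_pi_sub (x y : ℝ) :
    Complex.exp (Complex.I * (((π : ℂ) - (x : ℂ)) + ((π : ℂ) - (y : ℂ))))
      = Complex.exp (-Complex.I * ((x : ℂ) + (y : ℂ))) := by
  rw [show Complex.I * (((π : ℂ) - (x : ℂ)) + ((π : ℂ) - (y : ℂ)))
      = 2 * (π : ℂ) * Complex.I + -Complex.I * ((x : ℂ) + (y : ℂ)) by ring,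
    Complex.exp_add, Complex.exp_two_pi_mul_I, one_mul]

lemma mu_conj (k : ℝ × ℝ) :
    (starRingEnd ℂ) (mu t1 t2 t3 k) = mu t1 t2 t3 (π - k.1, π - k.2) := by
  unfold mu
  simp only [map_sub, map_add, map_mul, Complex.conj_ofReal, Complex.conj_I,
    ← Complex.exp_conj]
  push_cast
  rw [exp_pi_sub k.1, exp_pi_sub k.2, exp_two_pi_sub k.1 k.2]
  ring

lemma mu_per1 (k : ℝ × ℝ) : mu t1 t2 t3 (k.1 + 2 * π, k.2) = mu t1 t2 t3 k := by
  unfold mu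
  push_cast
  rw [show Complex.I * ((k.1 : ℂ) + 2 * (π : ℂ)) = Complex.I * (k.1 : ℂ) + 2 * (π : ℂ) * Complex.I
      by ring,
    show Complex.I * (((k.1 : ℂ) + 2 * (π : ℂ)) + (k.2 : ℂ))
      = Complex.I * ((k.1 : ℂ) + (k.2 : ℂ)) + 2 * (π : ℂ) * Complex.I by ring,
    Complex.exp_add, Complex.exp_add, Complex.exp_two_pi_mul_I, mul_one, mul_one]

lemma mu_per2 (k : ℝ × ℝ) : mu t1 t2 t3 (k.1, k.2 + 2 * π) = mu t1 t2 t3 k := by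
  unfold mu
  push_cast
  rw [show Complex.I * ((k.2 : ℂ) + 2 * (π : ℂ)) = Complex.I * (k.2 : ℂ) + 2 * (π : ℂ) * Complex.I
      by ring,
    show Complex.I * ((k.1 : ℂ) + ((k.2 : ℂ) + 2 * (π : ℂ)))
      = Complex.I * ((k.1 : ℂ) + (k.2 : ℂ)) + 2 * (π : ℂ) * Complex.I by ring,
    Complex.exp_add, Complex.exp_add, Complex.exp_two_pi_mul_I, mul_one, mul_one]

lemma neg_one_zpow_sq (n : ℤ) : (-1 : ℂ) ^ n * (-1 : ℂ) ^ n = 1 := by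
  rw [← zpow_add₀ (by norm_num : (-1 : ℂ) ≠ 0), ← two_mul, zpow_mul]
  norm_num

lemma gcoef_conj (hint : IntegrableOn (fun k : ℝ × ℝ => (mu t1 t2 t3 k)⁻¹)
      (Set.Icc (-π) π ×ˢ Set.Icc (-π) π)) (a : ℤ × ℤ) :
    (starRingEnd ℂ) (gcoef t1 t2 t3 a) = (-1 : ℂ) ^ (a.1 + a.2) * gcoef t1 t2 t3 a := by
  have hFint : IntegrableOn (fun k : ℝ × ℝ =>
      Complex.exp (Complex.I * ((k.1 : ℂ) * (a.1 : ℂ) + (k.2 : ℂ) * (a.2 : ℂ)))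
        / mu t1 t2 t3 k) (Set.Icc (-π) π ×ˢ Set.Icc (-π) π) := by
    simp only [div_eq_mul_inv]
    refine hint.bdd_mul (c := 1) ?_ (Filter.Eventually.of_forall fun x => ?_)
    · exact (Complex.continuous_exp.comp (by fun_prop)).aestronglyMeasurable
    · rw [Complex.norm_exp]
      simp [Complex.mul_re, Complex.add_im, Complex.mul_im]
  have hper1 : ∀ k : ℝ × ℝ,
      (fun k : ℝ × ℝ =>
        Complex.exp (Complex.I * ((k.1 : ℂ) * (a.1 : ℂ) + (k.2 : ℂ) * (a.2 : ℂ)))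
          / mu t1 t2 t3 k) (k.1 + 2 * π, k.2)
      = (fun k : ℝ × ℝ =>
        Complex.exp (Complex.I * ((k.1 : ℂ) * (a.1 : ℂ) + (k.2 : ℂ) * (a.2 : ℂ)))
          / mu t1 t2 t3 k) k := by
    intro k
    simp only [mu_per1]
    push_cast
    rw [show Complex.I * (((k.1 : ℂ) + 2 * (π : ℂ)) * (a.1 : ℂ) + (k.2 : ℂ) * (a.2 : ℂ))
        = Complex.I * ((k.1 : ℂ) * (a.1 : ℂ) + (k.2 : ℂ) * (a.2 : ℂ))
          + (a.1 : ℂ) * (2 * (π : ℂ) * Complex.I) by ring,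
      Complex.exp_add, Complex.exp_int_mul_two_pi_mul_I, mul_one]
  have hper2 : ∀ k : ℝ × ℝ,
      (fun k : ℝ × ℝ =>
        Complex.exp (Complex.I * ((k.1 : ℂ) * (a.1 : ℂ) + (k.2 : ℂ) * (a.2 : ℂ)))
          / mu t1 t2 t3 k) (k.1, k.2 + 2 * π)
      = (fun k : ℝ × ℝ =>
        Complex.exp (Complex.I * ((k.1 : ℂ) * (a.1 : ℂ) + (k.2 : ℂ) * (a.2 : ℂ)))
          / mu t1 t2 t3 k) k := by
    intro k
    simp only [mu_per2]
    push_cast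
    rw [show Complex.I * ((k.1 : ℂ) * (a.1 : ℂ) + ((k.2 : ℂ) + 2 * (π : ℂ)) * (a.2 : ℂ))
        = Complex.I * ((k.1 : ℂ) * (a.1 : ℂ) + (k.2 : ℂ) * (a.2 : ℂ))
          + (a.2 : ℂ) * (2 * (π : ℂ) * Complex.I) by ring,
      Complex.exp_add, Complex.exp_int_mul_two_pi_mul_I, mul_one]
  have hrefl := box_reflect _ hper1 hper2 hFint
  simp only at hrefl
  have hconj : ∀ k : ℝ × ℝ,
      (starRingEnd ℂ)
        (Complex.exp (Complex.I * ((k.1 : ℂ) * (a.1 : ℂ) + (k.2 : ℂ) * (a.2 : ℂ)))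
          / mu t1 t2 t3 k)
      = (-1 : ℂ) ^ (a.1 + a.2) *
        (Complex.exp (Complex.I * (((π - k.1 : ℝ) : ℂ) * (a.1 : ℂ) + ((π - k.2 : ℝ) : ℂ) * (a.2 : ℂ)))
          / mu t1 t2 t3 (π - k.1, π - k.2)) := by
    intro k
    rw [map_div₀, mu_conj]
    rw [← mul_div_assoc]
    congr 1
    rw [← Complex.exp_conj]
    simp only [map_mul, map_add, Complex.conj_I, Complex.conj_ofReal, map_intCast]
    push_cast
    rw [show Complex.I * (((π : ℂ) - (k.1 : ℂ)) * (a.1 : ℂ) + ((π : ℂ) - (k.2 : ℂ)) * (a.2 : ℂ))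
        = ((a.1 + a.2 : ℤ) : ℂ) * ((π : ℂ) * Complex.I)
          + -Complex.I * ((k.1 : ℂ) * (a.1 : ℂ) + (k.2 : ℂ) * (a.2 : ℂ)) by push_cast; ring,
      Complex.exp_add, Complex.exp_int_mul, Complex.exp_pi_mul_I,
      ← mul_assoc, neg_one_zpow_sq, one_mul]
  unfold gcoef
  rw [map_mul, map_inv₀, Complex.conj_ofReal, ← integral_conj]
  rw [MeasureTheory.integral_congr_ae (Filter.Eventually.of_forall hconj),
    MeasureTheory.integral_const_mul, hrefl]
  ring

end Main

/-- `conj (W(p)) = W((π,π) − p)`; in particular `conj (W(p⁺)) = W(p⁻)` for a zero `p⁺` of `μ`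
and `p⁻ = (π,π) − p⁺`. -/
theorem Wfun_conj_symmetry (t1 t2 t3 : ℝ) (ht1 : 0 < t1) (ht2 : 0 < t2) (ht3 : 0 < t3)
    (hint : IntegrableOn (fun k : ℝ × ℝ => (mu t1 t2 t3 k)⁻¹)
      (Set.Icc (-π) π ×ˢ Set.Icc (-π) π)) :
    (∀ p : ℝ × ℝ, conj (Wfun t1 t2 t3 p) = Wfun t1 t2 t3 (π - p.1, π - p.2)) ∧
    (∀ pplus : ℝ × ℝ, mu t1 t2 t3 pplus = 0 →
      conj (Wfun t1 t2 t3 pplus) = Wfun t1 t2 t3 (π - pplus.1, π - pplus.2)) := by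
  suffices h : ∀ p : ℝ × ℝ, conj (Wfun t1 t2 t3 p) = Wfun t1 t2 t3 (π - p.1, π - p.2) from
    ⟨h, fun p _ => h p⟩
  intro p
  have hg := gcoef_conj t1 t2 t3 hint
  unfold Wfun
  simp only [map_add, map_sub, map_mul]
  rw [hg (0, 0), hg (1, 0), hg (0, 1), hg (1, 1)]
  simp only [← Complex.exp_conj, map_mul, map_add, Complex.conj_I, Complex.conj_ofReal]
  push_cast
  rw [exp_pi_sub p.1, exp_pi_sub p.2, exp_two_pi_sub p.1 p.2]
  norm_num
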